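/- Let v be a vertex of T and let S be the subtree of T consisting of v and all of its descendants, of height h(S). Then the vertex set of S is the union of at most ⌊log₂ h(S)⌋ + 1 memory intervals. In particular, if every internal vertex of T has at least two children, the vertex set of S is the union of O(log log |S|) memory intervals. -/

import Mathlib

namespace VEB

inductive OTree : Type where
  | node : List OTree → OTree

def OTree.children : OTree → List OTree
  | .node cs => cs

mutual
  def height : OTree → ℕ
    | .node cs => 1 + heightList cs
  def heightList : List OTree → ℕ
    | [] => 0
    | c :: cs => max (height c) (heightList cs)
end

def subtreeAt? : OTree → List ℕ → Option OTree
  | t, [] => some t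
  | t, i :: p =>
    match t.children[i]? with
    | some c => subtreeAt? c p
    | none => none

/-- `p` is (the path of) a vertex of `t`. -/
def IsVertex (t : OTree) (p : List ℕ) : Prop := (subtreeAt? t p).isSome

/-- `p` is a leaf of `t`. -/
def IsLeaf (t : OTree) (p : List ℕ) : Prop := subtreeAt? t p = some (.node [])

/-- All leaves of `t` are at the same depth (the bottom level). -/
def Uniform (t : OTree) : Prop := ∀ p, IsLeaf t p → p.length + 1 = height t

/-- The top `m+1` levels of `t` (the truncation of height `m+1`). -/
def trunc : ℕ → OTree → OTree
  | 0, _ => .node []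
  | m+1, t => .node (t.children.map (trunc m))

/-- Paths of the vertices at depth `m`, in left-to-right order. -/
def levelPaths : ℕ → OTree → List (List ℕ)
  | 0, _ => [[]]
  | m+1, t => (t.children.zipIdx.map fun ic => (levelPaths m ic.1).map (ic.2 :: ·)).flatten

/-- The level at which a tree of height `h` is cut: `max ⌊ε h⌋ 1`. -/
noncomputable def cutLevel (ε : ℝ) (h : ℕ) : ℕ := max ⌊ε * (h : ℝ)⌋₊ 1

/-- The van Emde Boas order of the vertex paths of `t` (with recursion fuel). -/
noncomputable def vEBAux (ε : ℝ) : ℕ → OTree → List (List ℕ)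
  | 0, _ => []
  | fuel+1, t =>
    if height t ≤ 1 then [[]]
    else
      let m := cutLevel ε (height t)
      vEBAux ε fuel (trunc (m - 1) t) ++
        ((levelPaths m t).map fun q =>
          match subtreeAt? t q with
          | some s => (vEBAux ε fuel s).map (q ++ ·)
          | none => []).flatten

/-- The van Emde Boas order `vEB_ε(t)` of the vertex paths of `t`. -/
noncomputable def vEB (ε : ℝ) (t : OTree) : List (List ℕ) := vEBAux ε (height t) t

/-- Position (index) of vertex `p` in the van Emde Boas order. -/
noncomputable def pos (ε : ℝ) (t : OTree) (p : List ℕ) : ℕ := (vEB ε t).idxOf p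

/-- `A` is a set of vertices occupying consecutive positions in `vEB_ε(t)`. -/
def MemInterval (ε : ℝ) (t : OTree) (A : Set (List ℕ)) : Prop :=
  ∃ i n, A = {p | p ∈ ((vEB ε t).drop i).take n}

/-- The vertices of the decomposition `D` of `t`: pairs `(p, k)` of the root path
and the height of a decomposition subtree (with recursion fuel). -/
noncomputable def decompAux (ε : ℝ) : ℕ → OTree → List (List ℕ × ℕ)
  | 0, _ => []
  | fuel+1, t =>
    if height t ≤ 1 then [([], 1)]
    else
      let m := cutLevel ε (height t)
      ([], height t) ::
        (decompAux ε fuel (trunc (m - 1) t) ++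
          ((levelPaths m t).map fun q =>
            match subtreeAt? t q with
            | some s => (decompAux ε fuel s).map fun r => (q ++ r.1, r.2)
            | none => []).flatten)

/-- The vertices of the decomposition `D` of `t`. -/
noncomputable def decompVerts (ε : ℝ) (t : OTree) : List (List ℕ × ℕ) :=
  decompAux ε (height t) t

/-- The children in the decomposition tree `D` of the decomposition vertex `(p, k)`:
the top tree followed by the bottom trees in left-to-right order. -/
noncomputable def dChildren (ε : ℝ) (t : OTree) (p : List ℕ) (k : ℕ) : List (List ℕ × ℕ) :=
  if k ≤ 1 then []
  else
    match subtreeAt? t p with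
    | some s =>
      (p, cutLevel ε k) ::
        (levelPaths (cutLevel ε k) s).map fun q => (p ++ q, k - cutLevel ε k)
    | none => []

/-- The decomposition subtree `(p, k)` contains the vertex `w` of `t`;
equivalently, the leaf `{w}` of `D` lies in the subtree of `D` rooted at `(p, k)`. -/
def DContains (p : List ℕ) (k : ℕ) (w : List ℕ) : Prop :=
  p <+: w ∧ w.length < p.length + k

/-- Vertex `v` is to the left of the branch with leaf `ℓ`. -/
def LeftOfBranch (v ℓ : List ℕ) : Prop := List.Lex (· < ·) v (ℓ.take v.length)

/-- Vertex `v` is to the right of the branch with leaf `ℓ`. -/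
def RightOfBranch (v ℓ : List ℕ) : Prop := List.Lex (· < ·) (ℓ.take v.length) v

/-- Every internal vertex of `t` has at least `a` children. -/
def MinArity (t : OTree) (a : ℕ) : Prop :=
  ∀ p s, subtreeAt? t p = some s → s.children ≠ [] → a ≤ s.children.length

/-- Every internal vertex of `t` has at most `b` children. -/
def MaxArity (t : OTree) (b : ℕ) : Prop :=
  ∀ p s, subtreeAt? t p = some s → s.children.length ≤ b

/-- `w` lies on the leftmost branch descending from `v` (always taking the leftmost child). -/
def OnLeftmostBranch (v w : List ℕ) : Prop :=
  v <+: w ∧ ∀ n (hn : n < w.length), v.length ≤ n → w.get ⟨n, hn⟩ = 0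

/-- `w` lies on the rightmost branch descending from `v` (always taking the rightmost child). -/
def OnRightmostBranch (t : OTree) (v w : List ℕ) : Prop :=
  v <+: w ∧ ∀ n (hn : n < w.length), v.length ≤ n →
    ∀ s, subtreeAt? t (w.take n) = some s → w.get ⟨n, hn⟩ + 1 = s.children.length


-- BATCH1
@[simp] lemma children_node (cs : List OTree) : (OTree.node cs).children = cs := rfl

@[simp] lemma subtreeAt?_nil (t : OTree) : subtreeAt? t [] = some t := rfl

lemma subtreeAt?_cons (cs : List OTree) (i : ℕ) (p : List ℕ) :
    subtreeAt? (OTree.node cs) (i :: p) = cs[i]?.bind (fun c => subtreeAt? c p) := by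
  rw [subtreeAt?]
  cases h : cs[i]? with
  | none => simp only [children_node, h]; rfl
  | some c => simp only [children_node, h]; rfl

lemma height_node (cs : List OTree) : height (OTree.node cs) = 1 + heightList cs := by
  rw [height]

lemma height_pos (t : OTree) : 1 ≤ height t := by
  cases t with | node cs => rw [height]; omega

lemma heightList_le {c : OTree} {cs : List OTree} (h : c ∈ cs) : height c ≤ heightList cs := by
  induction cs with
  | nil => simp at h
  | cons a l ih =>
    rw [heightList]
    rcases List.mem_cons.1 h with rfl | h
    · exact le_max_left _ _
    · exact le_trans (ih h) (le_max_right _ _)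

lemma heightList_le_of {cs : List OTree} {n : ℕ} (h : ∀ c ∈ cs, height c ≤ n) :
    heightList cs ≤ n := by
  induction cs with
  | nil => rw [heightList]; omega
  | cons a l ih =>
    rw [heightList]
    exact max_le (h a (by simp)) (ih fun c hc => h c (by simp [hc]))

lemma subtreeAt?_append (t : OTree) (p q : List ℕ) :
    subtreeAt? t (p ++ q) = (subtreeAt? t p).bind (fun s => subtreeAt? s q) := by
  induction p generalizing t with
  | nil => simp
  | cons i p ih =>
    rcases t with ⟨cs⟩
    rw [List.cons_append, subtreeAt?_cons, subtreeAt?_cons]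
    cases cs[i]? with
    | none => simp
    | some c => simp [ih]

lemma height_subtree_le {t s : OTree} {p : List ℕ} (h : subtreeAt? t p = some s) :
    height s + p.length ≤ height t := by
  induction p generalizing t with
  | nil => rw [subtreeAt?_nil] at h; cases h; simp
  | cons i p ih =>
    rcases t with ⟨cs⟩
    rw [subtreeAt?_cons] at h
    cases hc : cs[i]? with
    | none => rw [hc] at h; simp at h
    | some c =>
      rw [hc] at h
      simp only [Option.bind_some] at h
      have h1 := ih h
      have h2 : height c ≤ heightList cs := heightList_le (by
        have := List.getElem?_eq_some_iff.1 hc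
        obtain ⟨hlt, he⟩ := this
        exact he ▸ List.getElem_mem _)
      rw [height_node]
      simp only [List.length_cons]
      omega

lemma length_lt_height {t s : OTree} {p : List ℕ} (h : subtreeAt? t p = some s) :
    p.length < height t := by
  have := height_subtree_le h; have := height_pos s; omega

lemma exists_max_child : ∀ (cs : List OTree), cs ≠ [] →
    ∃ (i : ℕ) (c : OTree), cs[i]? = some c ∧ height c = heightList cs := by
  intro cs
  induction cs with
  | nil => intro h; exact absurd rfl h
  | cons a l ih =>
    intro _
    by_cases h : heightList l ≤ height a
    · refine ⟨0, a, List.getElem?_cons_zero, by rw [heightList]; omega⟩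
    · have hl : l ≠ [] := by
        rintro rfl; rw [heightList] at h; have := height_pos a; omega
      obtain ⟨i, c, hic, hc⟩ := ih hl
      refine ⟨i + 1, c, by simpa using hic, by rw [heightList]; omega⟩

lemma exists_deep_leaf : ∀ (n : ℕ) (t : OTree), height t ≤ n →
    ∃ p, IsLeaf t p ∧ p.length + 1 = height t := by
  intro n
  induction n with
  | zero => intro t ht; have := height_pos t; omega
  | succ n ih =>
    rintro ⟨cs⟩ ht
    rcases eq_or_ne cs [] with rfl | hne
    · exact ⟨[], rfl, by simp [height_node, heightList]⟩
    · obtain ⟨i, c, hic, hc⟩ := exists_max_child cs hne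
      have hcle : height c ≤ n := by
        rw [height_node] at ht; omega
      obtain ⟨p, hp, hlen⟩ := ih c hcle
      refine ⟨i :: p, ?_, ?_⟩
      · rw [IsLeaf, subtreeAt?_cons, hic]
        exact hp
      · rw [height_node]; simp only [List.length_cons]; omega

lemma height_subtree_uniform {t s : OTree} {p : List ℕ} (hu : Uniform t)
    (h : subtreeAt? t p = some s) : height s + p.length = height t := by
  obtain ⟨q, hq, hlen⟩ := exists_deep_leaf (height s) s le_rfl
  have hleaf : IsLeaf t (p ++ q) := by
    rw [IsLeaf, subtreeAt?_append, h]; exact hq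
  have := hu _ hleaf
  rw [List.length_append] at this
  omega

lemma trunc_succ (k : ℕ) (t : OTree) :
    trunc (k + 1) t = OTree.node (t.children.map (trunc k)) := by rw [trunc]

lemma subtreeAt?_trunc : ∀ (p : List ℕ) (k : ℕ) (t : OTree), p.length ≤ k →
    subtreeAt? (trunc k t) p = (subtreeAt? t p).map (trunc (k - p.length)) := by
  intro p
  induction p with
  | nil => intro k t _; simp
  | cons i p ih =>
    intro k t hk
    cases k with
    | zero => simp at hk
    | succ k =>
      rcases t with ⟨cs⟩
      rw [trunc_succ, subtreeAt?_cons, subtreeAt?_cons]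
      simp only [children_node, List.getElem?_map]
      cases hc : cs[i]? with
      | none => simp
      | some c =>
        simp only [Option.map_some, Option.bind_some]
        rw [ih k c (by simpa using hk)]
        simp only [List.length_cons, Nat.succ_sub_succ]

lemma subtreeAt?_trunc_none : ∀ (p : List ℕ) (k : ℕ) (t : OTree), k < p.length →
    subtreeAt? (trunc k t) p = none := by
  intro p
  induction p with
  | nil => intro k t h; simp at h
  | cons i p ih =>
    intro k t hk
    cases k with
    | zero =>
      rw [trunc, subtreeAt?_cons]
      simp
    | succ k =>
      rcases t with ⟨cs⟩
      rw [trunc_succ, subtreeAt?_cons]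
      simp only [children_node, List.getElem?_map]
      cases hc : cs[i]? with
      | none => simp
      | some c =>
        simp only [Option.map_some, Option.bind_some]
        exact ih k c (by simp at hk; omega)

lemma height_trunc_le : ∀ (k : ℕ) (t : OTree), height (trunc k t) ≤ k + 1 := by
  intro k
  induction k with
  | zero => intro t; rw [trunc, height_node, heightList]
  | succ k ih =>
    intro t
    rw [trunc_succ, height_node]
    have : heightList (t.children.map (trunc k)) ≤ k + 1 := by
      apply heightList_le_of
      intro c hc
      obtain ⟨c', _, rfl⟩ := List.mem_map.1 hc
      exact ih c'
    omega

lemma height_trunc_eq {t : OTree} {p : List ℕ} {s : OTree} (h : subtreeAt? t p = some s)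
    (k : ℕ) (hk : k = p.length) : height (trunc k t) = k + 1 := by
  subst hk
  have h1 : subtreeAt? (trunc p.length t) p = some (trunc 0 s) := by
    rw [subtreeAt?_trunc p p.length t le_rfl, h]; simp
  have := length_lt_height h1
  have := height_trunc_le p.length t
  omega

-- BATCH2
lemma heightList_eq_zero {cs : List OTree} (h : heightList cs = 0) : cs = [] := by
  cases cs with
  | nil => rfl
  | cons a l => rw [heightList] at h; have := height_pos a; omega

lemma eq_node_nil_of_height_le_one {t : OTree} (h : height t ≤ 1) : t = OTree.node [] := by
  rcases t with ⟨cs⟩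
  rw [height_node] at h
  have h0 : heightList cs = 0 := by omega
  rw [heightList_eq_zero h0]

lemma uniform_trunc {t : OTree} (hu : Uniform t) {k : ℕ} (hk : k < height t) :
    Uniform (trunc k t) := by
  intro p hp
  have hple : p.length ≤ k := by
    by_contra h
    rw [IsLeaf, subtreeAt?_trunc_none p k t (by omega)] at hp
    cases hp
  rw [IsLeaf, subtreeAt?_trunc p k t hple] at hp
  obtain ⟨s, hs, hmap⟩ := Option.map_eq_some_iff.1 hp
  obtain ⟨q, hq, hqlen⟩ := exists_deep_leaf (height t) t le_rfl
  have hqk : subtreeAt? t (q.take k) ≠ none := by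
    intro hnone
    have h2 : subtreeAt? t (q.take k ++ q.drop k) = none := by
      rw [subtreeAt?_append, hnone]; rfl
    rw [List.take_append_drop] at h2
    rw [IsLeaf] at hq
    rw [hq] at h2
    cases h2
  obtain ⟨s', hs'⟩ := Option.ne_none_iff_exists'.1 hqk
  have hlen' : k = (q.take k).length := by
    rw [List.length_take]
    omega
  have htr : height (trunc k t) = k + 1 := height_trunc_eq hs' k hlen'
  rcases Nat.lt_or_ge p.length k with hlt | hge
  · exfalso
    rcases hkp : k - p.length with _ | j
    · omega
    · rw [hkp, trunc_succ] at hmap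
      rcases s with ⟨cs⟩
      have hcs : cs = [] := by
        have h3 := congrArg OTree.children hmap
        simp only [children_node] at h3
        exact List.map_eq_nil_iff.1 h3
      subst hcs
      have hleaf : IsLeaf t p := hs
      have := hu _ hleaf
      have := length_lt_height hs
      omega
  · have hpk : p.length = k := le_antisymm hple hge
    rw [hpk, htr]

lemma levelPaths_zero (t : OTree) : levelPaths 0 t = [[]] := by rw [levelPaths]

lemma levelPaths_succ (m : ℕ) (t : OTree) :
    levelPaths (m+1) t =
      (t.children.zipIdx.map fun ic => (levelPaths m ic.1).map (ic.2 :: ·)).flatten := by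
  rw [levelPaths]

lemma mem_levelPaths : ∀ (m : ℕ) (t : OTree) (q : List ℕ),
    q ∈ levelPaths m t ↔ (subtreeAt? t q).isSome ∧ q.length = m := by
  intro m
  induction m with
  | zero =>
    intro t q
    rw [levelPaths_zero]
    simp only [List.mem_singleton, List.length_eq_zero_iff]
    constructor
    · rintro rfl; simp
    · rintro ⟨_, rfl⟩; rfl
  | succ m ih =>
    intro t q
    rcases t with ⟨cs⟩
    rw [levelPaths_succ]
    simp only [List.mem_flatten, List.mem_map, children_node]
    constructor
    · rintro ⟨l, ⟨⟨c, i⟩, hic, rfl⟩, hq⟩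
      obtain ⟨q', hq', rfl⟩ := List.mem_map.1 hq
      have hic' : cs[i]? = some c := List.mk_mem_zipIdx_iff_getElem?.1 hic
      obtain ⟨hs, hlen⟩ := (ih c q').1 hq'
      rw [subtreeAt?_cons, hic']
      simp only [Option.bind_some, List.length_cons]
      exact ⟨hs, by omega⟩
    · rintro ⟨hs, hlen⟩
      rcases q with _ | ⟨i, q'⟩
      · simp at hlen
      · rw [subtreeAt?_cons] at hs
        cases hc : cs[i]? with
        | none => rw [hc] at hs; simp at hs
        | some c =>
          rw [hc] at hs
          simp only [Option.bind_some] at hs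
          refine ⟨(levelPaths m c).map (i :: ·),
            ⟨(c, i), List.mk_mem_zipIdx_iff_getElem?.2 hc, rfl⟩, ?_⟩
          exact List.mem_map.2 ⟨q', (ih c q').2 ⟨hs, by simpa using hlen⟩, rfl⟩

lemma cutLevel_pos (ε : ℝ) (h : ℕ) : 1 ≤ cutLevel ε h := le_max_right _ _

lemma cutLevel_le {ε : ℝ} (hε : ε ≤ 1/2) {h : ℕ} (hh : 2 ≤ h) : cutLevel ε h ≤ h - 1 := by
  rw [cutLevel]
  apply max_le _ (by omega)
  have hcast : (2 : ℝ) ≤ (h : ℝ) := by exact_mod_cast hh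
  have h1 : ε * (h : ℝ) ≤ ((h - 1 : ℕ) : ℝ) := by
    rw [Nat.cast_sub (by omega : 1 ≤ h)]
    push_cast
    nlinarith
  calc ⌊ε * (h:ℝ)⌋₊ ≤ ⌊((h-1:ℕ):ℝ)⌋₊ := Nat.floor_le_floor h1
    _ = h - 1 := Nat.floor_natCast _

lemma vEBAux_succ (ε : ℝ) (fuel : ℕ) (t : OTree) :
    vEBAux ε (fuel+1) t =
      if height t ≤ 1 then [[]]
      else
        vEBAux ε fuel (trunc (cutLevel ε (height t) - 1) t) ++
          ((levelPaths (cutLevel ε (height t)) t).map fun q =>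
            match subtreeAt? t q with
            | some s => (vEBAux ε fuel s).map (q ++ ·)
            | none => []).flatten := by
  rw [vEBAux]

lemma vEBAux_fuel {ε : ℝ} (hε : ε ≤ 1/2) :
    ∀ (n f₁ f₂ : ℕ) (t : OTree), height t ≤ n → height t ≤ f₁ → height t ≤ f₂ →
      vEBAux ε f₁ t = vEBAux ε f₂ t := by
  intro n
  induction n with
  | zero => intro f1 f2 t ht _ _; have := height_pos t; omega
  | succ n ih =>
    intro f1 f2 t htn ht1 ht2
    have h1 := height_pos t
    rcases f1 with _ | f1
    · omega
    rcases f2 with _ | f2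
    · omega
    rw [vEBAux_succ, vEBAux_succ]
    by_cases h : height t ≤ 1
    · simp [h]
    · simp only [h, if_false]
      have hht : 2 ≤ height t := by omega
      have hm1 : 1 ≤ cutLevel ε (height t) := cutLevel_pos ε _
      have hm2 : cutLevel ε (height t) ≤ height t - 1 := cutLevel_le hε hht
      have htr : height (trunc (cutLevel ε (height t) - 1) t) ≤ cutLevel ε (height t) :=
        le_trans (height_trunc_le _ _) (by omega)
      congr 1
      · exact ih f1 f2 _ (by omega) (by omega) (by omega)
      · congr 1
        apply List.map_congr_left
        intro q hq
        obtain ⟨hqs, hqlen⟩ := (mem_levelPaths _ t q).1 hq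
        cases hsub : subtreeAt? t q with
        | none => rfl
        | some s =>
          have hhs : height s ≤ height t - cutLevel ε (height t) := by
            have := height_subtree_le hsub; omega
          show List.map (fun x => q ++ x) (vEBAux ε f1 s) =
            List.map (fun x => q ++ x) (vEBAux ε f2 s)
          rw [ih f1 f2 s (by omega) (by omega) (by omega)]

lemma mem_vEBAux {ε : ℝ} (hε : ε ≤ 1/2) :
    ∀ (n : ℕ) (t : OTree) (fuel : ℕ) (p : List ℕ), height t ≤ n → height t ≤ fuel →
      (p ∈ vEBAux ε fuel t ↔ (subtreeAt? t p).isSome) := by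
  intro n
  induction n with
  | zero => intro t fuel p ht _; have := height_pos t; omega
  | succ n ih =>
    intro t fuel p htn htf
    have h1 := height_pos t
    rcases fuel with _ | fuel
    · omega
    rw [vEBAux_succ]
    by_cases h : height t ≤ 1
    · have ht0 := eq_node_nil_of_height_le_one h
      subst ht0
      simp only [if_pos h, List.mem_singleton]
      constructor
      · rintro rfl; simp
      · intro hp
        rcases p with _ | ⟨i, p⟩
        · rfl
        · rw [subtreeAt?_cons] at hp; simp at hp
    · simp only [h, if_false, List.mem_append, List.mem_flatten, List.mem_map]
      have hht : 2 ≤ height t := by omega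
      have hm1 : 1 ≤ cutLevel ε (height t) := cutLevel_pos ε _
      have hm2 : cutLevel ε (height t) ≤ height t - 1 := cutLevel_le hε hht
      have htr : height (trunc (cutLevel ε (height t) - 1) t) ≤ cutLevel ε (height t) :=
        le_trans (height_trunc_le _ _) (by omega)
      constructor
      · rintro (hp | ⟨l, ⟨q, hq, rfl⟩, hpl⟩)
        · have hv := (ih (trunc (cutLevel ε (height t) - 1) t) fuel p (by omega) (by omega)).1 hp
          have hple : p.length ≤ cutLevel ε (height t) - 1 := by
            by_contra hc
            rw [subtreeAt?_trunc_none p _ t (by omega)] at hv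
            simp at hv
          rw [subtreeAt?_trunc p _ t hple] at hv
          cases ho : subtreeAt? t p with
          | none => rw [ho] at hv; simp at hv
          | some _ => simp
        · obtain ⟨hqs, hqlen⟩ := (mem_levelPaths _ t q).1 hq
          cases hsub : subtreeAt? t q with
          | none => rw [hsub] at hqs; simp at hqs
          | some s =>
            rw [hsub] at hpl
            replace hpl : p ∈ (vEBAux ε fuel s).map (q ++ ·) := hpl
            obtain ⟨r, hr, rfl⟩ := List.mem_map.1 hpl
            have hhs : height s ≤ height t - cutLevel ε (height t) := by
              have := height_subtree_le hsub; omega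
            have := (ih s fuel r (by omega) (by omega)).1 hr
            rw [subtreeAt?_append, hsub]
            simpa using this
      · intro hp
        obtain ⟨s₀, hs₀⟩ := Option.isSome_iff_exists.1 hp
        rcases Nat.lt_or_ge p.length (cutLevel ε (height t)) with hlt | hge
        · left
          apply (ih (trunc (cutLevel ε (height t) - 1) t) fuel p (by omega) (by omega)).2
          rw [subtreeAt?_trunc p _ t (by omega), hs₀]
          simp
        · right
          have hsplit : p.take (cutLevel ε (height t)) ++ p.drop (cutLevel ε (height t)) = p :=
            List.take_append_drop _ p
          have hbind : subtreeAt? t p =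
              (subtreeAt? t (p.take (cutLevel ε (height t)))).bind
                (fun s => subtreeAt? s (p.drop (cutLevel ε (height t)))) := by
            conv_lhs => rw [← hsplit]
            exact subtreeAt?_append t _ _
          cases hq : subtreeAt? t (p.take (cutLevel ε (height t))) with
          | none => rw [hq] at hbind; rw [hbind] at hs₀; simp at hs₀
          | some s =>
            rw [hq, Option.bind_some] at hbind
            have hrs : subtreeAt? s (p.drop (cutLevel ε (height t))) = some s₀ := by
              rw [← hbind, hs₀]
            have hhs : height s ≤ height t - cutLevel ε (height t) := by
              have := height_subtree_le hq
              have : (p.take (cutLevel ε (height t))).length = cutLevel ε (height t) := by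
                rw [List.length_take]; omega
              omega
            refine ⟨_, ⟨p.take (cutLevel ε (height t)),
              (mem_levelPaths _ t _).2 ⟨by rw [hq]; rfl, by rw [List.length_take]; omega⟩, rfl⟩, ?_⟩
            show p ∈ (match subtreeAt? t (p.take (cutLevel ε (height t))) with
              | some s => (vEBAux ε fuel s).map ((p.take (cutLevel ε (height t))) ++ ·)
              | none => [])
            rw [hq]
            refine List.mem_map.2 ⟨p.drop (cutLevel ε (height t)), ?_, hsplit⟩
            exact (ih s fuel _ (by omega) (by omega)).2 (by rw [hrs]; rfl)

-- BATCH3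
lemma head_ge_of_mem_blocks {m k : ℕ} {cs : List OTree} {q : List ℕ}
    (h : q ∈ ((cs.zipIdx k).map fun ic => (levelPaths m ic.1).map (ic.2 :: ·)).flatten) :
    ∃ (i : ℕ) (q' : List ℕ), q = i :: q' ∧ k ≤ i := by
  obtain ⟨l, hl, hq⟩ := List.mem_flatten.1 h
  obtain ⟨⟨c, i⟩, hic, rfl⟩ := List.mem_map.1 hl
  obtain ⟨q', _, rfl⟩ := List.mem_map.1 hq
  exact ⟨i, q', rfl, (List.mk_mem_zipIdx_iff_le_and_getElem?_sub.1 hic).1⟩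

lemma levelPaths_split_aux (m : ℕ)
    (hsplit : ∀ (c : OTree) (v : List ℕ), ∃ A B C : List (List ℕ),
        levelPaths m c = A ++ B ++ C ∧ (∀ q ∈ B, v <+: q) ∧
        (∀ q ∈ A, ¬ v <+: q) ∧ (∀ q ∈ C, ¬ v <+: q)) :
    ∀ (cs : List OTree) (n j : ℕ) (v' : List ℕ),
      ∃ A B C : List (List ℕ),
        ((cs.zipIdx n).map fun ic => (levelPaths m ic.1).map (ic.2 :: ·)).flatten
          = A ++ B ++ C ∧
        (∀ q ∈ B, (j :: v') <+: q) ∧ (∀ q ∈ A, ¬ (j :: v') <+: q) ∧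
        (∀ q ∈ C, ¬ (j :: v') <+: q) := by
  intro cs
  induction cs with
  | nil =>
    intro n j v'
    exact ⟨[], [], [], by simp, by simp, by simp, by simp⟩
  | cons c cs ih =>
    intro n j v'
    rw [List.zipIdx_cons]
    rcases eq_or_ne j n with rfl | hjn
    · obtain ⟨A', B', C', hsp, hB, hA, hC⟩ := hsplit c v'
      refine ⟨A'.map (j :: ·), B'.map (j :: ·),
        C'.map (j :: ·) ++
          ((cs.zipIdx (j+1)).map fun ic => (levelPaths m ic.1).map (ic.2 :: ·)).flatten,
        ?_, ?_, ?_, ?_⟩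
      · rw [List.map_cons, List.flatten_cons, hsp]
        simp only [List.map_append]
        simp [List.append_assoc]
      · intro q hq
        obtain ⟨q', hq', rfl⟩ := List.mem_map.1 hq
        exact List.cons_prefix_cons.2 ⟨rfl, hB q' hq'⟩
      · intro q hq
        obtain ⟨q', hq', rfl⟩ := List.mem_map.1 hq
        intro hpre
        exact hA q' hq' (List.cons_prefix_cons.1 hpre).2
      · intro q hq
        rcases List.mem_append.1 hq with hq | hq
        · obtain ⟨q', hq', rfl⟩ := List.mem_map.1 hq
          intro hpre
          exact hC q' hq' (List.cons_prefix_cons.1 hpre).2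
        · obtain ⟨i, q', rfl, hi⟩ := head_ge_of_mem_blocks hq
          intro hpre
          have := (List.cons_prefix_cons.1 hpre).1
          omega
    · obtain ⟨A', B', C', hsp, hB, hA, hC⟩ := ih (n+1) j v'
      refine ⟨(levelPaths m c).map (n :: ·) ++ A', B', C', ?_, hB, ?_, hC⟩
      · rw [List.map_cons, List.flatten_cons, hsp]
        simp [List.append_assoc]
      · intro q hq
        rcases List.mem_append.1 hq with hq | hq
        · obtain ⟨q', hq', rfl⟩ := List.mem_map.1 hq
          intro hpre
          exact hjn (List.cons_prefix_cons.1 hpre).1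
        · exact hA q hq

lemma levelPaths_split : ∀ (m : ℕ) (t : OTree) (v : List ℕ),
    ∃ A B C : List (List ℕ), levelPaths m t = A ++ B ++ C ∧ (∀ q ∈ B, v <+: q) ∧
      (∀ q ∈ A, ¬ v <+: q) ∧ (∀ q ∈ C, ¬ v <+: q) := by
  intro m
  induction m with
  | zero =>
    intro t v
    rcases v with _ | ⟨j, v'⟩
    · exact ⟨[], [[]], [], by simp [levelPaths_zero], by simp, by simp, by simp⟩
    · refine ⟨[[]], [], [], by simp [levelPaths_zero], by simp, ?_, by simp⟩
      intro q hq
      simp only [List.mem_singleton] at hq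
      subst hq
      intro hpre
      have := hpre.length_le
      simp at this
  | succ m ih =>
    intro t v
    rcases v with _ | ⟨j, v'⟩
    · exact ⟨[], levelPaths (m+1) t, [], by simp, fun q _ => List.nil_prefix, by simp, by simp⟩
    · rw [levelPaths_succ]
      rw [show t.children.zipIdx = t.children.zipIdx 0 from rfl]
      exact levelPaths_split_aux m (fun c v => ih c v) t.children 0 j v'

lemma pairwise_fst_lt_enumFrom {α : Type*} :
    ∀ (l : List α) (n : ℕ), List.Pairwise (fun a b => a.2 < b.2) (l.zipIdx n) := by
  intro l
  induction l with
  | nil => intro n; simp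
  | cons x xs ih =>
    intro n
    rw [List.zipIdx_cons]
    refine List.Pairwise.cons ?_ (ih (n+1))
    rintro ⟨c, i⟩ hic
    exact (List.mk_mem_zipIdx_iff_le_and_getElem?_sub.1 hic).1

lemma nodup_levelPaths : ∀ (m : ℕ) (t : OTree), (levelPaths m t).Nodup := by
  intro m
  induction m with
  | zero => intro t; rw [levelPaths_zero]; simp
  | succ m ih =>
    intro t
    rw [levelPaths_succ]
    rw [List.nodup_flatten]
    constructor
    · intro l hl
      obtain ⟨⟨c, i⟩, _, rfl⟩ := List.mem_map.1 hl
      exact (ih c).map (fun a b h => by simpa using h)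
    · rw [List.pairwise_map]
      apply List.Pairwise.imp ?_
        (pairwise_fst_lt_enumFrom t.children 0)
      rintro ⟨c, i⟩ ⟨c', i'⟩ hlt
      intro q hq hq'
      obtain ⟨q1, _, rfl⟩ := List.mem_map.1 hq
      obtain ⟨q2, _, h2⟩ := List.mem_map.1 hq'
      have : i' = i := by
        injection h2 with h2a h2b
      omega

lemma sum_ge_of_forall {l : List ℕ} {K : ℕ} (h : ∀ x ∈ l, K ≤ x) :
    l.length * K ≤ l.sum := by
  induction l with
  | nil => simp
  | cons a l ih =>
    rw [List.sum_cons, List.length_cons]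
    have h1 := h a (by simp)
    have h2 := ih fun x hx => h x (by simp [hx])
    calc (l.length + 1) * K = l.length * K + K := by ring
      _ ≤ l.sum + a := by omega
      _ = a + l.sum := by omega

lemma levelPaths_card : ∀ (n : ℕ) (t : OTree), height t ≤ n →
    (∀ p s', subtreeAt? t p = some s' → height s' + p.length = height t) →
    (∀ p s', subtreeAt? t p = some s' → s'.children ≠ [] → 2 ≤ s'.children.length) →
    2 ^ (height t - 1) ≤ (levelPaths (height t - 1) t).length := by
  intro n
  induction n with
  | zero => intro t h; have := height_pos t; omega
  | succ n ih =>
    rintro ⟨cs⟩ htn hht harr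
    by_cases h1 : height (OTree.node cs) ≤ 1
    · have he : height (OTree.node cs) = 1 := le_antisymm h1 (height_pos _)
      rw [he]
      simp [levelPaths_zero]
    · have hh2 : 2 ≤ height (OTree.node cs) := by omega
      have hcs : cs ≠ [] := by
        rintro rfl
        rw [height_node, heightList] at hh2
        omega
      have hcs2 : 2 ≤ cs.length := by
        have := harr [] (OTree.node cs) rfl (by simpa using hcs)
        simpa using this
      obtain ⟨m, hm⟩ : ∃ m, height (OTree.node cs) - 1 = m + 1 :=
        ⟨height (OTree.node cs) - 2, by omega⟩
      rw [hm, levelPaths_succ, List.length_flatten]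
      have hblock : ∀ x ∈ (((OTree.node cs).children.zipIdx.map
          fun ic => (levelPaths m ic.1).map (ic.2 :: ·)).map List.length), 2 ^ m ≤ x := by
        intro x hx
        obtain ⟨l, hl, rfl⟩ := List.mem_map.1 hx
        obtain ⟨⟨c, i⟩, hic, rfl⟩ := List.mem_map.1 hl
        have hic' : cs[i]? = some c := by
          simpa using List.mk_mem_zipIdx_iff_getElem?.1 hic
        have hsub : subtreeAt? (OTree.node cs) [i] = some c := by
          rw [subtreeAt?_cons, hic']; rfl
        have hhc : height c = height (OTree.node cs) - 1 := by
          have := hht [i] c hsub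
          simp only [List.length_cons, List.length_nil] at this
          omega
        have hch : height c - 1 = m := by omega
        have hihc := ih c (by omega)
          (fun p s' hp => by
            have hsub2 : subtreeAt? (OTree.node cs) (i :: p) = some s' := by
              rw [subtreeAt?_cons, hic', Option.bind_some]; exact hp
            have := hht (i :: p) s' hsub2
            simp only [List.length_cons] at this
            omega)
          (fun p s' hp hne => by
            have hsub2 : subtreeAt? (OTree.node cs) (i :: p) = some s' := by
              rw [subtreeAt?_cons, hic', Option.bind_some]; exact hp
            exact harr (i :: p) s' hsub2 hne)
        rw [hch] at hihc
        rw [List.length_map]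
        exact hihc
      have hlen : (((OTree.node cs).children.zipIdx.map
          fun ic => (levelPaths m ic.1).map (ic.2 :: ·)).map List.length).length = cs.length := by
        simp
      calc 2 ^ (m + 1) = 2 * 2 ^ m := by ring
        _ ≤ cs.length * 2 ^ m := Nat.mul_le_mul_right _ hcs2
        _ ≤ _ := by rw [← hlen]; exact sum_ge_of_forall hblock

-- BATCH4
lemma subtreeAt?_take {t s : OTree} {p : List ℕ} (h : subtreeAt? t p = some s) (k : ℕ) :
    ∃ u, subtreeAt? t (p.take k) = some u ∧ subtreeAt? u (p.drop k) = some s := by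
  have h2 := subtreeAt?_append t (p.take k) (p.drop k)
  rw [List.take_append_drop, h] at h2
  cases hq : subtreeAt? t (p.take k) with
  | none => rw [hq] at h2; simp at h2
  | some u => rw [hq, Option.bind_some] at h2; exact ⟨u, rfl, h2.symm⟩

lemma exists_vertex_of_lt {t : OTree} {k : ℕ} (hk : k < height t) :
    ∃ (u : OTree) (p : List ℕ), subtreeAt? t p = some u ∧ p.length = k := by
  obtain ⟨q, hq, hqlen⟩ := exists_deep_leaf (height t) t le_rfl
  rw [IsLeaf] at hq
  obtain ⟨u, hu, _⟩ := subtreeAt?_take hq k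
  exact ⟨u, q.take k, hu, by rw [List.length_take]; omega⟩

lemma uniform_subtree {t u : OTree} {p : List ℕ} (hu : Uniform t)
    (h : subtreeAt? t p = some u) : Uniform u := by
  intro p' hp'
  have hleaf : IsLeaf t (p ++ p') := by rw [IsLeaf, subtreeAt?_append, h]; exact hp'
  have h1 := hu _ hleaf
  have h2 := height_subtree_uniform hu h
  rw [List.length_append] at h1
  omega

lemma cutLevel_two_mul {ε : ℝ} (hε0 : 0 ≤ ε) (hε : ε ≤ 1/2) {h : ℕ} (hh : 2 ≤ h) :
    2 * cutLevel ε h ≤ h := by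
  rw [cutLevel]
  have h1 : 2 * ⌊ε * (h : ℝ)⌋₊ ≤ h := by
    have hfl : (⌊ε * (h : ℝ)⌋₊ : ℝ) ≤ ε * h := Nat.floor_le (by positivity)
    have hcast : (2 : ℝ) ≤ (h : ℝ) := by exact_mod_cast hh
    have h3 : ((2 * ⌊ε * (h : ℝ)⌋₊ : ℕ) : ℝ) ≤ (h : ℝ) := by push_cast; nlinarith
    exact_mod_cast h3
  rcases max_cases ⌊ε * (h : ℝ)⌋₊ 1 with ⟨he, _⟩ | ⟨he, _⟩ <;> omega

lemma infix_map_append {q : List ℕ} {L M : List (List ℕ)} (h : L <:+: M) :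
    L.map (q ++ ·) <:+: M.map (q ++ ·) := by
  obtain ⟨a, b, rfl⟩ := h
  exact ⟨a.map (q ++ ·), b.map (q ++ ·), by simp⟩

lemma vEB_decomp {ε : ℝ} (hε : ε ≤ 1/2) {t : OTree} (h2 : 2 ≤ height t) :
    vEB ε t = vEB ε (trunc (cutLevel ε (height t) - 1) t) ++
      ((levelPaths (cutLevel ε (height t)) t).map fun q =>
        match subtreeAt? t q with
        | some s => (vEB ε s).map (q ++ ·)
        | none => []).flatten := by
  have hm1 : 1 ≤ cutLevel ε (height t) := cutLevel_pos ε _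
  have hm2 : cutLevel ε (height t) ≤ height t - 1 := cutLevel_le hε h2
  have htr : height (trunc (cutLevel ε (height t) - 1) t) ≤ cutLevel ε (height t) :=
    le_trans (height_trunc_le _ _) (by omega)
  rw [vEB]
  rw [vEBAux_fuel hε (height t) (height t) ((height t - 1) + 1) t le_rfl le_rfl (by omega)]
  rw [vEBAux_succ, if_neg (by omega)]
  congr 1
  · rw [vEB]
    exact vEBAux_fuel hε (height t) _ _ _ (by omega) (by omega) (by omega)
  · congr 1
    apply List.map_congr_left
    intro q hq
    obtain ⟨hqs, hqlen⟩ := (mem_levelPaths _ t q).1 hq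
    cases hsub : subtreeAt? t q with
    | none => rfl
    | some s =>
      have hhs : height s ≤ height t - cutLevel ε (height t) := by
        have := height_subtree_le hsub; omega
      show List.map (fun x => q ++ x) (vEBAux ε (height t - 1) s) =
        List.map (fun x => q ++ x) (vEB ε s)
      rw [vEB, vEBAux_fuel hε (height t) (height t - 1) (height s) s (by omega) (by omega) le_rfl]

lemma mem_vEB {ε : ℝ} (hε : ε ≤ 1/2) (t : OTree) (p : List ℕ) :
    p ∈ vEB ε t ↔ (subtreeAt? t p).isSome :=
  mem_vEBAux hε (height t) t (height t) p le_rfl le_rfl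

-- BATCH5
lemma main_cover {ε : ℝ} (hε0 : 0 ≤ ε) (hε : ε ≤ 1/2) :
    ∀ (n : ℕ) (t : OTree), height t ≤ n → Uniform t →
      ∀ (v : List ℕ) (s : OTree), subtreeAt? t v = some s →
        ∃ Ls : List (List (List ℕ)),
          Ls.length ≤ Nat.log 2 (height s) + 1 ∧
          (∀ L ∈ Ls, L <:+: vEB ε t) ∧
          (∀ w, ((subtreeAt? t w).isSome ∧ v <+: w) ↔ ∃ L ∈ Ls, w ∈ L) := by
  intro n
  induction n with
  | zero => intro t ht; have := height_pos t; omega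
  | succ n ih =>
    intro t htn hu v s hsv
    have h1 := height_pos t
    by_cases hle : height t ≤ 1
    · have ht1 : height t = 1 := by omega
      have ht0 := eq_node_nil_of_height_le_one hle
      subst ht0
      have hv : v = [] := by
        rcases v with _ | ⟨i, v'⟩
        · rfl
        · rw [subtreeAt?_cons] at hsv; simp at hsv
      subst hv
      have hvEB : vEB ε (OTree.node []) = [[]] := by
        have h2 : vEBAux ε (0 + 1) (OTree.node []) = [[]] := by
          rw [vEBAux_succ, if_pos hle]
        rw [vEB, ht1]
        exact h2
      refine ⟨[[[]]], by simp, ?_, ?_⟩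
      · intro L hL
        simp only [List.mem_singleton] at hL
        subst hL
        rw [hvEB]
      · intro w
        constructor
        · rintro ⟨hw, -⟩
          rcases w with _ | ⟨i, w'⟩
          · exact ⟨[[]], by simp⟩
          · rw [subtreeAt?_cons] at hw; simp at hw
        · rintro ⟨L, hL, hw⟩
          simp only [List.mem_singleton] at hL
          subst hL
          simp only [List.mem_singleton] at hw
          subst hw
          exact ⟨by simp, List.nil_prefix⟩
    · have hht2 : 2 ≤ height t := by omega
      have hm1 : 1 ≤ cutLevel ε (height t) := cutLevel_pos ε _
      have hm2 : cutLevel ε (height t) ≤ height t - 1 := cutLevel_le hε hht2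
      have h2m : 2 * cutLevel ε (height t) ≤ height t := cutLevel_two_mul hε0 hε hht2
      set m := cutLevel ε (height t) with hmdef
      have hdec := vEB_decomp hε hht2
      rw [← hmdef] at hdec
      have hsh : height s + v.length = height t := height_subtree_uniform hu hsv
      set f : List ℕ → List (List ℕ) := fun q =>
        match subtreeAt? t q with
        | some s => (vEB ε s).map (q ++ ·)
        | none => [] with hfdef
      rcases Nat.lt_or_ge v.length m with hvm | hvm
      · -- Case A : v in top tree
        have hvtr : subtreeAt? (trunc (m-1) t) v = some (trunc (m - 1 - v.length) s) := by
          rw [subtreeAt?_trunc v (m-1) t (by omega), hsv]; rfl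
        obtain ⟨u', p', hp', hp'len⟩ := exists_vertex_of_lt
          (show m - 1 - v.length < height s by omega)
        have hstr : height (trunc (m - 1 - v.length) s) = (m - 1 - v.length) + 1 :=
          height_trunc_eq hp' _ hp'len.symm
        have htrh : height (trunc (m-1) t) ≤ m := le_trans (height_trunc_le _ _) (by omega)
        obtain ⟨Ls₀, hlen₀, hinf₀, hiff₀⟩ :=
          ih (trunc (m-1) t) (by omega) (uniform_trunc hu (by omega)) v _ hvtr
        obtain ⟨A, B, C, hsp, hB, hA, hC⟩ := levelPaths_split m t v
        rw [hsp, List.map_append, List.map_append, List.flatten_append,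
          List.flatten_append] at hdec
        refine ⟨Ls₀ ++ [(B.map f).flatten], ?_, ?_, ?_⟩
        · rw [List.length_append, List.length_singleton]
          have h' : height (trunc (m - 1 - v.length) s) = m - v.length := by omega
          rw [h'] at hlen₀
          have hlog : Nat.log 2 (m - v.length) + 1 ≤ Nat.log 2 (height s) := by
            rw [← Nat.log_mul_base (by norm_num) (by omega : m - v.length ≠ 0)]
            exact Nat.log_mono_right (by omega : (m - v.length) * 2 ≤ height s)
          omega
        · intro L hL
          rcases List.mem_append.1 hL with hL | hL
          · obtain ⟨a, b, hab⟩ := hinf₀ L hL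
            refine ⟨a, b ++ ((A.map f).flatten ++ ((B.map f).flatten ++ (C.map f).flatten)), ?_⟩
            rw [hdec, ← hab]
            simp [List.append_assoc]
          · simp only [List.mem_singleton] at hL
            subst hL
            refine ⟨vEB ε (trunc (m-1) t) ++ (A.map f).flatten, (C.map f).flatten, ?_⟩
            rw [hdec]
            simp [List.append_assoc]
        · intro w
          constructor
          · rintro ⟨hw, hvw⟩
            obtain ⟨sw, hsw⟩ := Option.isSome_iff_exists.1 hw
            rcases Nat.lt_or_ge w.length m with hwm | hwm
            · have hwtr : (subtreeAt? (trunc (m-1) t) w).isSome := by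
                rw [subtreeAt?_trunc w (m-1) t (by omega), hsw]; rfl
              obtain ⟨L, hL, hwL⟩ := (hiff₀ w).1 ⟨hwtr, hvw⟩
              exact ⟨L, List.mem_append_left _ hL, hwL⟩
            · obtain ⟨u, hqu, hru⟩ := subtreeAt?_take hsw m
              have hq_mem : w.take m ∈ levelPaths m t :=
                (mem_levelPaths m t _).2 ⟨by rw [hqu]; rfl, by rw [List.length_take]; omega⟩
              have hvq : v <+: w.take m := by
                rw [List.prefix_iff_eq_take] at hvw ⊢
                rw [List.take_take, min_eq_left (le_of_lt hvm)]
                exact hvw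
              have hqB : w.take m ∈ B := by
                have hmem : w.take m ∈ A ++ B ++ C := by rw [← hsp]; exact hq_mem
                rcases List.mem_append.1 hmem with h' | h'
                · rcases List.mem_append.1 h' with h'' | h''
                  · exact absurd hvq (hA _ h'')
                  · exact h''
                · exact absurd hvq (hC _ h')
              refine ⟨(B.map f).flatten, List.mem_append_right _ (by simp), ?_⟩
              refine List.mem_flatten.2 ⟨f (w.take m), List.mem_map_of_mem (f := f) hqB, ?_⟩
              have hfq : f (w.take m) = (vEB ε u).map (w.take m ++ ·) := by
                simp only [hfdef]; rw [hqu]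
              rw [hfq]
              refine List.mem_map.2 ⟨w.drop m, ?_, List.take_append_drop m w⟩
              rw [mem_vEB hε, hru]; rfl
          · rintro ⟨L, hL, hwL⟩
            rcases List.mem_append.1 hL with hL | hL
            · obtain ⟨hwtr, hvw⟩ := (hiff₀ w).2 ⟨L, hL, hwL⟩
              refine ⟨?_, hvw⟩
              have hwlen : w.length ≤ m - 1 := by
                by_contra hc
                rw [subtreeAt?_trunc_none w (m-1) t (by omega)] at hwtr
                simp at hwtr
              rw [subtreeAt?_trunc w (m-1) t hwlen] at hwtr
              cases ho : subtreeAt? t w with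
              | none => rw [ho] at hwtr; simp at hwtr
              | some _ => simp
            · simp only [List.mem_singleton] at hL
              subst hL
              obtain ⟨l, hl, hwl⟩ := List.mem_flatten.1 hwL
              obtain ⟨q, hqB, rfl⟩ := List.mem_map.1 hl
              have hq_mem : q ∈ levelPaths m t := by
                rw [hsp]; exact List.mem_append_left _ (List.mem_append_right _ hqB)
              obtain ⟨hqs, hqlen⟩ := (mem_levelPaths m t q).1 hq_mem
              cases hqu : subtreeAt? t q with
              | none => rw [hqu] at hqs; simp at hqs
              | some u =>
                replace hwl : w ∈ (vEB ε u).map (q ++ ·) := by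
                  simp only [hfdef] at hwl
                  rw [hqu] at hwl
                  exact hwl
                obtain ⟨r, hr, rfl⟩ := List.mem_map.1 hwl
                rw [mem_vEB hε] at hr
                obtain ⟨sr, hsr⟩ := Option.isSome_iff_exists.1 hr
                constructor
                · rw [subtreeAt?_append, hqu, Option.bind_some, hsr]; rfl
                · obtain ⟨x, hx⟩ := hB q hqB
                  exact ⟨x ++ r, by rw [← List.append_assoc, hx]⟩
      · -- Case B : v in a bottom tree
        obtain ⟨u, hqu, hdu⟩ := subtreeAt?_take hsv m
        have hq_mem : v.take m ∈ levelPaths m t :=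
          (mem_levelPaths m t _).2 ⟨by rw [hqu]; rfl, by rw [List.length_take]; omega⟩
        have hhu : height u + m = height t := by
          have h' := height_subtree_uniform hu hqu
          rw [List.length_take] at h'
          omega
        obtain ⟨Ls', hlen', hinf', hiff'⟩ :=
          ih u (by omega) (uniform_subtree hu hqu) (v.drop m) s hdu
        have hfq : f (v.take m) = (vEB ε u).map (v.take m ++ ·) := by
          simp only [hfdef]; rw [hqu]
        refine ⟨Ls'.map (List.map (v.take m ++ ·)), ?_, ?_, ?_⟩
        · rw [List.length_map]; exact hlen'
        · intro L hL
          obtain ⟨L', hL', rfl⟩ := List.mem_map.1 hL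
          have h1' : L'.map (v.take m ++ ·) <:+: f (v.take m) := by
            rw [hfq]; exact infix_map_append (hinf' L' hL')
          have h2' : f (v.take m) <:+: ((levelPaths m t).map f).flatten :=
            List.infix_of_mem_flatten (List.mem_map_of_mem (f := f) hq_mem)
          obtain ⟨a, b, hab⟩ := h1'.trans h2'
          exact ⟨vEB ε (trunc (m-1) t) ++ a, b, by rw [hdec, ← hab]; simp [List.append_assoc]⟩
        · intro w
          constructor
          · rintro ⟨hw, hvw⟩
            obtain ⟨x, hx⟩ := hvw
            obtain ⟨sw, hsw⟩ := Option.isSome_iff_exists.1 hw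
            have htake : w.take m = v.take m := by
              rw [← hx, List.take_append_of_le_length (by omega)]
            have hdd : (subtreeAt? u (w.drop m)).isSome ∧ v.drop m <+: w.drop m := by
              constructor
              · have h' := subtreeAt?_append t (w.take m) (w.drop m)
                rw [List.take_append_drop, hsw, htake, hqu, Option.bind_some] at h'
                rw [← h']; rfl
              · rw [← hx, List.drop_append_of_le_length (by omega)]
                exact ⟨x, rfl⟩
            obtain ⟨L', hL', hrL⟩ := (hiff' _).1 hdd
            refine ⟨L'.map (v.take m ++ ·), List.mem_map_of_mem hL', ?_⟩
            refine List.mem_map.2 ⟨w.drop m, hrL, ?_⟩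
            rw [← htake]
            exact List.take_append_drop m w
          · rintro ⟨L, hL, hwL⟩
            obtain ⟨L', hL', rfl⟩ := List.mem_map.1 hL
            obtain ⟨r, hr, rfl⟩ := List.mem_map.1 hwL
            obtain ⟨hru, hdr⟩ := (hiff' r).2 ⟨L', hL', hr⟩
            constructor
            · obtain ⟨sr, hsr⟩ := Option.isSome_iff_exists.1 hru
              rw [subtreeAt?_append, hqu, Option.bind_some, hsr]; rfl
            · obtain ⟨y, hy⟩ := hdr
              refine ⟨y, ?_⟩
              rw [← hy, ← List.append_assoc]
              congr 1
              exact (List.take_append_drop m v).symm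

-- BATCH6
lemma memInterval_of_infix {ε : ℝ} {t : OTree} {L : List (List ℕ)} (h : L <:+: vEB ε t) :
    MemInterval ε t {p | p ∈ L} := by
  obtain ⟨a, b, hab⟩ := h
  refine ⟨a.length, L.length, ?_⟩
  have h2 : ((vEB ε t).drop a.length).take L.length = L := by
    rw [← hab, List.append_assoc, List.drop_left, List.take_left]
  rw [h2]

lemma loglog_ge {N : ℕ} (h : 1 ≤ N) : -(3/4 : ℝ) ≤ Real.log (Real.log N) := by
  have hexp : Real.exp (-(3/4)) ≤ Real.log 2 := by
    have h1 : (3/4 : ℝ) + 1 ≤ Real.exp (3/4) := Real.add_one_le_exp _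
    have h2 : Real.exp (-(3/4 : ℝ)) = (Real.exp (3/4))⁻¹ := by rw [Real.exp_neg]
    have h3 : (Real.exp ((3:ℝ)/4))⁻¹ ≤ ((7:ℝ)/4)⁻¹ := by
      apply inv_anti₀ (by norm_num) (by linarith)
    have h4 := Real.log_two_gt_d9
    rw [h2]
    have : ((7:ℝ)/4)⁻¹ = 4/7 := by norm_num
    linarith [h3]
  rcases Nat.lt_or_ge N 2 with h1 | h1
  · have hN1 : N = 1 := by omega
    subst hN1
    simp only [Nat.cast_one, Real.log_one]
    norm_num
  · have hl2 : Real.log 2 ≤ Real.log N :=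
      Real.log_le_log (by norm_num) (by exact_mod_cast h1)
    calc -(3/4 : ℝ) = Real.log (Real.exp (-(3/4))) := (Real.log_exp _).symm
      _ ≤ Real.log (Real.log 2) := Real.log_le_log (Real.exp_pos _) hexp
      _ ≤ Real.log (Real.log N) :=
          Real.log_le_log (lt_of_lt_of_le (Real.exp_pos _) hexp) hl2

lemma second_bound {h N : ℕ} (hh : 1 ≤ h) (hN1 : 1 ≤ N) (hN : 2^(h-1) ≤ N) :
    ((Nat.log 2 h : ℝ) + 1) ≤ 8 * (Real.log (Real.log N) + 1) := by
  have hll := loglog_ge hN1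
  rcases Nat.lt_or_ge h 3 with hh3 | hh3
  · have hlh : Nat.log 2 h ≤ 1 := by
      have : h = 1 ∨ h = 2 := by omega
      have := Nat.log_lt_of_lt_pow (b := 2) (x := 2) (by omega : h ≠ 0) (by rcases this with rfl | rfl <;> norm_num)
      omega
    have hlh' : (Nat.log 2 h : ℝ) ≤ 1 := by exact_mod_cast hlh
    linarith
  · -- h ≥ 3
    have l2gt := Real.log_two_gt_d9
    have l2lt := Real.log_two_lt_d9
    have hcast : (3:ℝ) ≤ (h:ℝ) := by exact_mod_cast hh3
    have hNpos : (0:ℝ) < (N:ℝ) := by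
      have : 0 < N := by omega
      exact_mod_cast this
    have hNge : (2:ℝ)^(h-1) ≤ (N:ℝ) := by exact_mod_cast hN
    have hlogN : ((h-1 : ℕ) : ℝ) * Real.log 2 ≤ Real.log N := by
      calc ((h-1:ℕ):ℝ) * Real.log 2 = Real.log (2^(h-1)) := by rw [Real.log_pow]
        _ ≤ Real.log N := Real.log_le_log (by positivity) hNge
    have hcasth : ((h-1:ℕ):ℝ) = (h:ℝ) - 1 := by
      rw [Nat.cast_sub (by omega : 1 ≤ h)]; norm_num
    rw [hcasth] at hlogN
    have hh1pos : (0:ℝ) < (h:ℝ) - 1 := by linarith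
    have hmulpos : (0:ℝ) < ((h:ℝ) - 1) * Real.log 2 := by nlinarith
    have hloglogN : Real.log (((h:ℝ)-1) * Real.log 2) ≤ Real.log (Real.log N) :=
      Real.log_le_log hmulpos hlogN
    rw [Real.log_mul (by linarith) (by nlinarith)] at hloglogN
    have hLlb : Real.log 2 ≤ Real.log ((h:ℝ)-1) :=
      Real.log_le_log (by norm_num) (by linarith)
    have hlog2lb : -(3/4 : ℝ) ≤ Real.log (Real.log 2) := by
      have hexp : Real.exp (-(3/4)) ≤ Real.log 2 := by
        have h1 : (3/4 : ℝ) + 1 ≤ Real.exp (3/4) := Real.add_one_le_exp _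
        have h2 : Real.exp (-(3/4 : ℝ)) = (Real.exp (3/4))⁻¹ := by rw [Real.exp_neg]
        have h3 : (Real.exp ((3:ℝ)/4))⁻¹ ≤ ((7:ℝ)/4)⁻¹ := by
          apply inv_anti₀ (by norm_num) (by linarith)
        rw [h2]
        have h5 : ((7:ℝ)/4)⁻¹ = 4/7 := by norm_num
        linarith
      calc -(3/4 : ℝ) = Real.log (Real.exp (-(3/4))) := (Real.log_exp _).symm
        _ ≤ Real.log (Real.log 2) := Real.log_le_log (Real.exp_pos _) hexp
    have hnat : (Nat.log 2 h : ℝ) ≤ Real.logb 2 h := by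
      have := Real.natLog_le_logb h 2
      push_cast at this ⊢
      exact this
    rw [Real.logb] at hnat
    have hnat2 : (Nat.log 2 h : ℝ) * Real.log 2 ≤ Real.log h := by
      rw [div_eq_mul_inv] at hnat
      have := mul_le_mul_of_nonneg_right hnat (le_of_lt (by linarith : (0:ℝ) < Real.log 2))
      rwa [mul_assoc, inv_mul_cancel₀ (by linarith : Real.log 2 ≠ 0), mul_one] at this
    have hlogh : Real.log h ≤ Real.log 2 + Real.log ((h:ℝ)-1) := by
      have hle : (h:ℝ) ≤ 2 * ((h:ℝ)-1) := by linarith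
      calc Real.log h ≤ Real.log (2 * ((h:ℝ)-1)) := Real.log_le_log (by linarith) hle
        _ = Real.log 2 + Real.log ((h:ℝ)-1) := Real.log_mul (by norm_num) (by linarith)
    set a : ℝ := (Nat.log 2 h : ℝ) with ha
    set L : ℝ := Real.log ((h:ℝ)-1) with hLd
    have key : a * Real.log 2 ≤ Real.log 2 + L := le_trans hnat2 hlogh
    have hLpos : (0.6931471803 : ℝ) ≤ L := by linarith
    -- goal : a + 1 ≤ 8 * (log log N + 1)
    have hrhs : L - 3/4 ≤ Real.log (Real.log N) := by linarith
    nlinarith [key, hLpos, l2gt, l2lt, hrhs]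



/-- For a vertex `v` of `T`, the subtree `S` of all descendants of `v`
(of height `height s`, where `s` is the subtree of `t` at `v`) is the union of at most
`⌊log₂ (height s)⌋ + 1` memory intervals; in particular, if every internal vertex has at
least two children, it is the union of `O(log log |S|)` memory intervals. -/
theorem subtree_few_memory_intervals :
    ∃ C : ℝ, 0 < C ∧
      ∀ (ε : ℝ), 0 < ε → ε ≤ 1/2 →
      ∀ (t : OTree), Uniform t →
      ∀ (v : List ℕ) (s : OTree), subtreeAt? t v = some s →
        (∃ (m : ℕ) (F : Fin m → Set (List ℕ)),
            m ≤ Nat.log 2 (height s) + 1 ∧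
            (∀ i, MemInterval ε t (F i)) ∧
            {w | IsVertex t w ∧ v <+: w} = ⋃ i, F i) ∧
        (MinArity t 2 →
          ∃ (m : ℕ) (F : Fin m → Set (List ℕ)),
            (m : ℝ) ≤ C *
              (Real.log (Real.log (Set.ncard {w | IsVertex t w ∧ v <+: w})) + 1) ∧
            (∀ i, MemInterval ε t (F i)) ∧
            {w | IsVertex t w ∧ v <+: w} = ⋃ i, F i) := by
  refine ⟨8, by norm_num, ?_⟩
  intro ε hε0 hε t hu v s hsv
  obtain ⟨Ls, hlen, hinf, hiff⟩ := main_cover (le_of_lt hε0) hε (height t) t le_rfl hu v s hsv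
  have hset : {w | IsVertex t w ∧ v <+: w} = ⋃ i : Fin Ls.length, {p | p ∈ Ls.get i} := by
    ext w
    simp only [Set.mem_setOf_eq, Set.mem_iUnion, IsVertex]
    constructor
    · intro hw
      obtain ⟨L, hL, hwL⟩ := (hiff w).1 hw
      obtain ⟨i, rfl⟩ := List.mem_iff_get.1 hL
      exact ⟨i, hwL⟩
    · rintro ⟨i, hw⟩
      exact (hiff w).2 ⟨Ls.get i, List.get_mem Ls i, hw⟩
  have hmemint : ∀ i : Fin Ls.length, MemInterval ε t {p | p ∈ Ls.get i} := fun i =>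
    memInterval_of_infix (hinf _ (List.get_mem Ls i))
  refine ⟨⟨Ls.length, fun i => {p | p ∈ Ls.get i}, hlen, hmemint, hset⟩, ?_⟩
  intro harity
  refine ⟨Ls.length, fun i => {p | p ∈ Ls.get i}, ?_, hmemint, hset⟩
  have hfin : {w | IsVertex t w ∧ v <+: w}.Finite := by
    apply Set.Finite.subset (List.finite_toSet (vEB ε t))
    intro w hw
    exact (mem_vEB hε t w).2 hw.1
  have hcard : 2 ^ (height s - 1) ≤ {w | IsVertex t w ∧ v <+: w}.ncard := by
    have hLP := levelPaths_card (height s) s le_rfl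
      (fun p s' hp => height_subtree_uniform (uniform_subtree hu hsv) hp)
      (fun p s' hp hne => harity (v ++ p) s'
        (by rw [subtreeAt?_append, hsv, Option.bind_some]; exact hp) hne)
    have hnd : ((levelPaths (height s - 1) s).map (v ++ ·)).Nodup :=
      (nodup_levelPaths _ s).map (fun a b hab => List.append_cancel_left hab)
    have hsub : ∀ w ∈ (levelPaths (height s - 1) s).map (v ++ ·),
        w ∈ {w | IsVertex t w ∧ v <+: w} := by
      intro w hw
      obtain ⟨q, hq, rfl⟩ := List.mem_map.1 hw
      obtain ⟨hqs, -⟩ := (mem_levelPaths _ s q).1 hq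
      refine ⟨?_, ⟨q, rfl⟩⟩
      show (subtreeAt? t (v ++ q)).isSome
      rw [subtreeAt?_append, hsv, Option.bind_some]
      exact hqs
    calc 2 ^ (height s - 1) ≤ ((levelPaths (height s - 1) s).map (v ++ ·)).length := by
          rw [List.length_map]; exact hLP
      _ = ((levelPaths (height s - 1) s).map (v ++ ·)).toFinset.card :=
          (List.toFinset_card_of_nodup hnd).symm
      _ = ((((levelPaths (height s - 1) s).map (v ++ ·)).toFinset : Finset (List ℕ)) :
            Set (List ℕ)).ncard := (Set.ncard_coe_finset _).symm
      _ ≤ _ := Set.ncard_le_ncard (fun w hw => hsub w (by simpa using hw)) hfin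
  have hN1 : 1 ≤ {w | IsVertex t w ∧ v <+: w}.ncard :=
    le_trans Nat.one_le_two_pow hcard
  have hsb := second_bound (height_pos s) hN1 hcard
  calc (Ls.length : ℝ) ≤ (Nat.log 2 (height s) : ℝ) + 1 := by exact_mod_cast hlen
    _ ≤ 8 * (Real.log (Real.log ({w | IsVertex t w ∧ v <+: w}.ncard)) + 1) := hsb


end VEB
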